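/- Let n ≥ 1 and let A ∈ ℝ^{n×n} be a Monge matrix. Then the identity permutation minimizes the assignment cost: for every permutation σ of {1,…,n}, ∑_{i=1}^{n} A_{i,i} ≤ ∑_{i=1}^{n} A_{i,σ(i)}. -/

import Mathlib

open Finset

/-- Inversion set of a permutation of `Fin n`. -/
private def invSet {n : ℕ} (σ : Equiv.Perm (Fin n)) : Finset (Fin n × Fin n) :=
  univ.filter (fun p => p.1 < p.2 ∧ σ p.2 < σ p.1)

private lemma swap_lt {n : ℕ} {a b x y : Fin n} (hb : (b : ℕ) = (a : ℕ) + 1)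
    (hxy : x < y) (hne : ¬(x = a ∧ y = b)) :
    Equiv.swap a b x < Equiv.swap a b y := by
  rw [Equiv.swap_apply_def, Equiv.swap_apply_def]
  have hxy' : (x : ℕ) < (y : ℕ) := hxy
  simp only [Fin.lt_def, Fin.ext_iff] at *
  split_ifs <;> omega

private lemma key_step {n : ℕ} (A : Fin n → Fin n → ℝ)
    (hA : ∀ i k j l : Fin n, i < k → j < l → A i j + A k l ≤ A i l + A k j)
    (σ : Equiv.Perm (Fin n)) {a b : Fin n} (hab : a < b) (hb : (b : ℕ) = (a : ℕ) + 1)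
    (hinv : σ b < σ a) :
    (invSet (σ * Equiv.swap a b)).card < (invSet σ).card ∧
      ∑ i, A i ((σ * Equiv.swap a b) i) ≤ ∑ i, A i (σ i) := by
  set s := Equiv.swap a b with hs
  set τ : Equiv.Perm (Fin n) := σ * s with hτ
  have habne : a ≠ b := hab.ne
  constructor
  · -- cardinality decreases
    have hmem : (a, b) ∈ invSet σ := by
      simp [invSet, hab, hinv]
    have hcard : (invSet τ).image (fun p => (s p.1, s p.2)) ⊆ (invSet σ).erase (a, b) := by
      intro p hp
      obtain ⟨q, hq, rfl⟩ := Finset.mem_image.mp hp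
      simp only [invSet, mem_filter, mem_univ, true_and] at hq
      obtain ⟨hlt, hσ⟩ := hq
      have hσ' : σ (s q.2) < σ (s q.1) := hσ
      have hne : ¬(q.1 = a ∧ q.2 = b) := by
        rintro ⟨rfl, rfl⟩
        have : s q.1 = q.2 := Equiv.swap_apply_left q.1 q.2
        have h2 : s q.2 = q.1 := Equiv.swap_apply_right q.1 q.2
        rw [this, h2] at hσ'
        exact absurd hσ' (not_lt.mpr hinv.le)
      have hlt' : s q.1 < s q.2 := swap_lt hb hlt hne
      refine Finset.mem_erase.mpr ⟨?_, ?_⟩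
      · intro h
        have h1 : s q.1 = a := congrArg Prod.fst h
        have h2 : s q.2 = b := congrArg Prod.snd h
        have e1 : q.1 = b := by
          have h1' := congrArg s h1; simpa [hs] using h1'
        have e2 : q.2 = a := by
          have h2' := congrArg s h2; simpa [hs] using h2'
        have : q.2 < q.1 := by
          rw [e1, e2]; exact hab
        exact absurd hlt (not_lt.mpr this.le)
      · simp [invSet, hlt', hσ']
    have hinj : Set.InjOn (fun p : Fin n × Fin n => (s p.1, s p.2)) (invSet τ) := by
      intro p _ q _ h
      have h1 : s p.1 = s q.1 := congrArg Prod.fst h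
      have h2 : s p.2 = s q.2 := congrArg Prod.snd h
      exact Prod.ext (s.injective h1) (s.injective h2)
    calc (invSet τ).card = ((invSet τ).image (fun p => (s p.1, s p.2))).card :=
            (Finset.card_image_of_injOn hinj).symm
      _ ≤ ((invSet σ).erase (a, b)).card := Finset.card_le_card hcard
      _ < (invSet σ).card := Finset.card_erase_lt_of_mem hmem
  · -- cost does not increase
    have hsplit : ∀ f : Fin n → ℝ,
        ∑ i, f i = f a + (f b + ∑ i ∈ (univ.erase a).erase b, f i) := by
      intro f
      rw [← Finset.add_sum_erase _ f (mem_univ a),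
        ← Finset.add_sum_erase _ f (Finset.mem_erase.mpr ⟨habne.symm, mem_univ b⟩)]
    rw [hsplit (fun i => A i (τ i)), hsplit (fun i => A i (σ i))]
    have hrest : ∑ i ∈ (univ.erase a).erase b, A i (τ i)
        = ∑ i ∈ (univ.erase a).erase b, A i (σ i) := by
      refine Finset.sum_congr rfl fun i hi => ?_
      simp only [Finset.mem_erase] at hi
      have : s i = i := Equiv.swap_apply_of_ne_of_ne hi.2.1 hi.1
      simp [hτ, Equiv.Perm.mul_apply, this]
    rw [hrest]
    have hτa : τ a = σ b := by simp [hτ, Equiv.Perm.mul_apply, hs]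
    have hτb : τ b = σ a := by simp [hτ, Equiv.Perm.mul_apply, hs]
    rw [hτa, hτb]
    have := hA a b (σ b) (σ a) hab hinv
    linarith

/-- **Monge matrices: the identity permutation is an optimal assignment.**
If `A` is an `n × n` Monge matrix (`A i j + A k l ≤ A i l + A k j` for `i < k`, `j < l`),
then the diagonal assignment has cost at most that of any permutation. -/
theorem monge_identity_optimal (n : ℕ) (hn : 1 ≤ n) (A : Fin n → Fin n → ℝ)
    (hA : ∀ i k j l : Fin n, i < k → j < l → A i j + A k l ≤ A i l + A k j)
    (σ : Equiv.Perm (Fin n)) :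
    ∑ i, A i i ≤ ∑ i, A i (σ i) := by
  suffices H : ∀ N : ℕ, ∀ σ : Equiv.Perm (Fin n), (invSet σ).card ≤ N →
      ∑ i, A i i ≤ ∑ i, A i (σ i) from H _ σ le_rfl
  intro N
  induction N with
  | zero =>
    intro σ hcard
    -- no inversions: σ is strictly monotone hence the identity
    have hmono : StrictMono σ := by
      intro x y hxy
      by_contra h
      have hlt : σ y < σ x := lt_of_le_of_ne (not_lt.mp h) (fun he => hxy.ne (σ.injective he.symm))
      have : (x, y) ∈ invSet σ := by simp [invSet, hxy, hlt]
      have := Finset.card_pos.mpr ⟨_, this⟩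
      omega
    have : (σ : Fin n → Fin n) = id := by
      have hr : Set.range (σ : Fin n → Fin n) = Set.range (id : Fin n → Fin n) := by
        rw [Set.range_id]; exact Set.range_eq_univ.mpr σ.surjective
      haveI inst : WellFoundedLT (Fin n) := inferInstance
      exact (@StrictMono.range_inj (Fin n) (Fin n) _ _ inst _ _ hmono strictMono_id).1 hr
    have hid : ∀ i, σ i = i := fun i => congrFun this i
    simp only [hid]
    exact le_refl _
  | succ N ih =>
    intro σ hcard
    by_cases hmono : StrictMono σ
    · have : (σ : Fin n → Fin n) = id := by
        have hr : Set.range (σ : Fin n → Fin n) = Set.range (id : Fin n → Fin n) := by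
          rw [Set.range_id]; exact Set.range_eq_univ.mpr σ.surjective
        haveI inst : WellFoundedLT (Fin n) := inferInstance
        exact (@StrictMono.range_inj (Fin n) (Fin n) _ _ inst _ _ hmono strictMono_id).1 hr
      have hid : ∀ i, σ i = i := fun i => congrFun this i
      simp only [hid]
      exact le_refl _
    · -- find an adjacent inversion
      obtain ⟨m, rfl⟩ : ∃ m, n = m + 1 := ⟨n - 1, by omega⟩
      rw [Fin.strictMono_iff_lt_succ] at hmono
      push_neg at hmono
      obtain ⟨i, hi⟩ := hmono
      set a := Fin.castSucc i
      set b := Fin.succ i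
      have hab : a < b := (Fin.castSucc_lt_succ : Fin.castSucc i < Fin.succ i)
      have hb : (b : ℕ) = (a : ℕ) + 1 := by simp [a, b]
      have hinv : σ b < σ a :=
        lt_of_le_of_ne hi (fun he => hab.ne' (σ.injective he))
      obtain ⟨hc, hle⟩ := key_step A hA σ hab hb hinv
      exact (ih (σ * Equiv.swap a b) (by omega)).trans hle
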